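/- For any finitely supported multi-index ν, ∑_{m ≤ ν} C(ν, m) · ((|m| + 2)! / 2) · ((|ν − m| + 2)! / 2) = (|ν| + 5)! / 120. -/

import Mathlib

open Finset

private lemma sumpow1 (n : ℕ) : ∑ k ∈ range n, (k:ℚ) = n*(n-1)/2 := by
  induction n with
  | zero => simp
  | succ m ih => rw [Finset.sum_range_succ, ih]; push_cast; ring

private lemma sumpow2 (n : ℕ) : ∑ k ∈ range n, (k:ℚ)^2 = n*(n-1)*(2*n-1)/6 := by
  induction n with
  | zero => simp
  | succ m ih => rw [Finset.sum_range_succ, ih]; push_cast; ring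

private lemma sumpow3 (n : ℕ) : ∑ k ∈ range n, (k:ℚ)^3 = n^2*(n-1)^2/4 := by
  induction n with
  | zero => simp
  | succ m ih => rw [Finset.sum_range_succ, ih]; push_cast; ring

private lemma sumpow4 (n : ℕ) : ∑ k ∈ range n, (k:ℚ)^4 = n*(n-1)*(2*n-1)*(3*n^2-3*n-1)/30 := by
  induction n with
  | zero => simp
  | succ m ih => rw [Finset.sum_range_succ, ih]; push_cast; ring

private lemma conv' (n : ℕ) : ∑ k ∈ range (n+1), ((k:ℚ)+1)*((k:ℚ)+2)*((n:ℚ)-k+1)*((n:ℚ)-k+2)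
    = ((n:ℚ)+1)*((n:ℚ)+2)*((n:ℚ)+3)*((n:ℚ)+4)*((n:ℚ)+5)/30 := by
  have e : ∀ k ∈ range (n+1), ((k:ℚ)+1)*((k:ℚ)+2)*((n:ℚ)-k+1)*((n:ℚ)-k+2)
      = (k:ℚ)^4 - (2*(n:ℚ))*(k:ℚ)^3 + ((n:ℚ)^2-3*n-5)*(k:ℚ)^2 + (3*(n:ℚ)^2+5*n)*(k:ℚ)
        + (2*(n:ℚ)^2+6*n+4) := fun k _ => by ring
  rw [Finset.sum_congr rfl e]
  simp only [Finset.sum_add_distrib, Finset.sum_sub_distrib, ← Finset.mul_sum,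
    Finset.sum_const, Finset.card_range, nsmul_eq_mul]
  rw [sumpow1, sumpow2, sumpow3, sumpow4]
  push_cast
  ring

private lemma single_var (n : ℕ) :
    ∑ k ∈ range (n+1), (n.choose k : ℚ) * (((k+2).factorial : ℚ)/2 * (((n-k+2).factorial : ℚ)/2))
      = ((n+5).factorial : ℚ)/120 := by
  have step : ∀ k ∈ range (n+1), (n.choose k : ℚ) * (((k+2).factorial : ℚ)/2 * (((n-k+2).factorial : ℚ)/2))
      = (n.factorial : ℚ)/4 * (((k:ℚ)+1)*((k:ℚ)+2)*((n:ℚ)-k+1)*((n:ℚ)-k+2)) := by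
    intro k hk
    have hk' : k ≤ n := by simpa [Nat.lt_succ_iff] using hk
    have h1 : (n.choose k : ℚ) * (k.factorial : ℚ) * ((n-k).factorial : ℚ) = (n.factorial : ℚ) := by
      exact_mod_cast congrArg (Nat.cast : ℕ → ℚ) (Nat.choose_mul_factorial_mul_factorial hk')
    have e1 : ((k+2).factorial : ℚ) = ((k:ℚ)+2)*((k:ℚ)+1)*(k.factorial : ℚ) := by
      rw [Nat.factorial_succ, Nat.factorial_succ]; push_cast; ring
    have e2 : ((n-k+2).factorial : ℚ) = (((n:ℚ)-k)+2)*(((n:ℚ)-k)+1)*((n-k).factorial : ℚ) := by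
      rw [Nat.factorial_succ, Nat.factorial_succ]
      push_cast [Nat.cast_sub hk']; ring
    rw [e1, e2]
    linear_combination (((k:ℚ)+1)*((k:ℚ)+2)*((n:ℚ)-k+1)*((n:ℚ)-k+2)/4) * h1
  rw [Finset.sum_congr rfl step, ← Finset.mul_sum, conv']
  have e3 : ((n+5).factorial : ℚ)
      = ((n:ℚ)+5)*((n:ℚ)+4)*((n:ℚ)+3)*((n:ℚ)+2)*((n:ℚ)+1)*(n.factorial : ℚ) := by
    show (((n+4)+1).factorial : ℚ) = _
    rw [Nat.factorial_succ, Nat.factorial_succ, Nat.factorial_succ, Nat.factorial_succ,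
      Nat.factorial_succ]
    push_cast; ring
  rw [e3]; ring

private lemma vander (b c : ℕ) (h : ℕ → ℚ) :
    (∑ i ∈ range (b+1), (b.choose i : ℚ) * ∑ j ∈ range (c+1), (c.choose j : ℚ) * h (i+j))
    = ∑ t ∈ range (b+c+1), ((b+c).choose t : ℚ) * h t := by
  classical
  set F : ℕ × ℕ → ℚ := fun p => (b.choose p.1 : ℚ) * ((c.choose p.2 : ℚ) * h (p.1 + p.2)) with hF
  set S : Finset (ℕ × ℕ) := (range (b+c+1)).biUnion (fun t => Finset.HasAntidiagonal.antidiagonal t) with hS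
  have hsub : range (b+1) ×ˢ range (c+1) ⊆ S := by
    intro p hp
    simp only [mem_product, mem_range, Nat.lt_succ_iff] at hp
    simp only [hS, mem_biUnion, mem_range, Finset.mem_antidiagonal]
    exact ⟨p.1 + p.2, by omega, by simp⟩
  have hvan : ∀ p ∈ S, p ∉ range (b+1) ×ˢ range (c+1) → F p = 0 := by
    intro p _ hp
    simp only [mem_product, mem_range, Nat.lt_succ_iff, not_and_or, not_le] at hp
    rcases hp with hp | hp <;> simp [hF, Nat.choose_eq_zero_of_lt hp]
  have hdisj : Set.PairwiseDisjoint (↑(range (b+c+1)) : Set ℕ) (fun t => Finset.HasAntidiagonal.antidiagonal t) := by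
    intro t1 _ t2 _ hne
    simp only [Function.onFun, Finset.disjoint_left]
    intro p hp1 hp2
    simp only [Finset.HasAntidiagonal.mem_antidiagonal] at hp1 hp2
    exact hne (hp1 ▸ hp2.symm ▸ rfl)
  calc (∑ i ∈ range (b+1), (b.choose i : ℚ) * ∑ j ∈ range (c+1), (c.choose j : ℚ) * h (i+j))
      = ∑ p ∈ range (b+1) ×ˢ range (c+1), F p := by
        rw [Finset.sum_product]; exact Finset.sum_congr rfl fun i _ => by rw [Finset.mul_sum]
    _ = ∑ p ∈ S, F p := Finset.sum_subset hsub hvan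
    _ = ∑ t ∈ range (b+c+1), ∑ p ∈ Finset.HasAntidiagonal.antidiagonal t, F p := Finset.sum_biUnion hdisj
    _ = ∑ t ∈ range (b+c+1), ((b+c).choose t : ℚ) * h t := by
        refine Finset.sum_congr rfl fun t _ => ?_
        rw [Nat.add_choose_eq, Nat.cast_sum, Finset.sum_mul]
        refine Finset.sum_congr rfl fun p hp => ?_
        rw [Finset.HasAntidiagonal.mem_antidiagonal] at hp
        simp only [hF, hp]
        push_cast
        ring

private lemma key (ν : ℕ →₀ ℕ) : ∀ h : ℕ → ℚ,
    ∑ m ∈ Finset.Iic ν, (∏ j ∈ ν.support, ((ν j).choose (m j) : ℚ)) * h (m.sum fun _ n => n)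
    = ∑ k ∈ range ((ν.sum fun _ n => n) + 1), ((ν.sum fun _ n => n).choose k : ℚ) * h k := by
  induction ν using Finsupp.induction with
  | zero =>
    intro h
    have : Finset.Iic (0 : ℕ →₀ ℕ) = {0} := by
      ext m; simp only [Finset.mem_Iic, Finset.mem_singleton, nonpos_iff_eq_zero]
    simp [this]
  | single_add a b f haf hb ih =>
    intro h
    classical
    have hfa : f a = 0 := Finsupp.notMem_support_iff.mp haf
    have hsupp : (Finsupp.single a b + f).support = insert a f.support := by
      rw [Finsupp.support_add_eq, Finsupp.support_single_ne_zero a hb]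
      · rw [Finset.insert_eq]
      · rw [Finsupp.support_single_ne_zero a hb]
        simpa [Finset.disjoint_left] using haf
    have hsum : ∀ g : ℕ →₀ ℕ, ∀ g' : ℕ →₀ ℕ,
        ((g + g').sum fun _ n => n) = (g.sum fun _ n => n) + (g'.sum fun _ n => n) :=
      fun g g' => Finsupp.sum_add_index' (fun _ => rfl) (fun _ _ _ => rfl)
    have hsingle : ∀ d : ℕ, ((Finsupp.single a d).sum fun _ n => n) = d :=
      fun d => Finsupp.sum_single_index rfl
    have hν : ((Finsupp.single a b + f).sum fun _ n => n) = b + (f.sum fun _ n => n) := by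
      rw [hsum, hsingle]
    have lhs_eq : ∑ m ∈ Finset.Iic (Finsupp.single a b + f),
        (∏ j ∈ (Finsupp.single a b + f).support,
          (((Finsupp.single a b + f) j).choose (m j) : ℚ)) * h (m.sum fun _ n => n)
        = ∑ p ∈ range (b+1) ×ˢ Finset.Iic f,
            ((b.choose p.1 : ℚ) * ∏ j ∈ f.support, ((f j).choose (p.2 j) : ℚ))
              * h (p.1 + (p.2.sum fun _ n => n)) := by
      refine Finset.sum_nbij' (fun m => (m a, m.erase a))
        (fun p => Finsupp.single a p.1 + p.2) ?_ ?_ ?_ ?_ ?_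
      · intro m hm
        rw [Finset.mem_Iic] at hm
        have hma : m a ≤ b := by
          have := Finsupp.le_def.mp hm a
          simpa [hfa] using this
        simp only [Finset.mem_product, Finset.mem_range, Nat.lt_succ_iff, Finset.mem_Iic]
        refine ⟨hma, ?_⟩
        rw [Finsupp.le_def]
        intro i
        by_cases hia : i = a
        · simp [hia]
        · have := Finsupp.le_def.mp hm i
          simpa [Finsupp.erase_ne hia, Finsupp.single_apply, Ne.symm hia] using this
      · intro p hp
        simp only [Finset.mem_product, Finset.mem_range, Nat.lt_succ_iff, Finset.mem_Iic] at hp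
        rw [Finset.mem_Iic, Finsupp.le_def]
        intro i
        by_cases hia : i = a
        · subst hia
          have : p.2 i = 0 := Nat.le_zero.mp (by simpa [hfa] using Finsupp.le_def.mp hp.2 i)
          simp [Finsupp.single_apply, this, hfa, hp.1]
        · simpa [Finsupp.single_apply, Ne.symm hia] using Finsupp.le_def.mp hp.2 i
      · intro m hm
        simp only
        rw [Finsupp.single_add_erase]
      · intro p hp
        simp only [Finset.mem_product, Finset.mem_range, Nat.lt_succ_iff, Finset.mem_Iic] at hp
        have hp2a : p.2 a = 0 := Nat.le_zero.mp (by simpa [hfa] using Finsupp.le_def.mp hp.2 a)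
        have h1 : (Finsupp.single a p.1 + p.2) a = p.1 := by
          simp [hp2a]
        have h2 : (Finsupp.single a p.1 + p.2).erase a = p.2 := by
          ext i
          by_cases hia : i = a
          · simp [hia, hp2a]
          · simp [Finsupp.erase_ne hia, Finsupp.single_apply, Ne.symm hia]
        show ((Finsupp.single a p.1 + p.2) a, (Finsupp.single a p.1 + p.2).erase a) = p
        rw [h1, h2]
      · intro m hm
        rw [Finset.mem_Iic] at hm
        have hma : m a ≤ b := by simpa [hfa] using Finsupp.le_def.mp hm a
        have hmrec : Finsupp.single a (m a) + m.erase a = m := Finsupp.single_add_erase a m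
        have hsum_m : (m.sum fun _ n => n) = m a + ((m.erase a).sum fun _ n => n) := by
          conv_lhs => rw [← hmrec]
          rw [hsum, hsingle]
        rw [hsupp, Finset.prod_insert haf]
        have hterma : (((Finsupp.single a b + f) a).choose (m a) : ℚ) = (b.choose (m a) : ℚ) := by
          simp [hfa]
        have htermj : ∀ j ∈ f.support,
            (((Finsupp.single a b + f) j).choose (m j) : ℚ) = ((f j).choose ((m.erase a) j) : ℚ) := by
          intro j hj
          have hja : j ≠ a := fun hj' => haf (hj' ▸ hj)
          rw [Finsupp.add_apply, Finsupp.single_apply, if_neg (Ne.symm hja), Finsupp.erase_ne hja,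
            zero_add]
        rw [hterma, Finset.prod_congr rfl htermj, hsum_m]
    rw [lhs_eq, Finset.sum_product, hν]
    have step2 : ∀ i ∈ range (b+1),
        (∑ p2 ∈ Finset.Iic f, ((b.choose i : ℚ) * ∏ j ∈ f.support, ((f j).choose (p2 j) : ℚ))
          * h (i + (p2.sum fun _ n => n)))
        = (b.choose i : ℚ) * ∑ k ∈ range ((f.sum fun _ n => n) + 1),
            (((f.sum fun _ n => n)).choose k : ℚ) * h (i + k) := by
      intro i _
      have hih := ih (fun k => h (i + k))
      beta_reduce at hih
      calc ∑ p2 ∈ Finset.Iic f, ((b.choose i : ℚ) * ∏ j ∈ f.support, ((f j).choose (p2 j) : ℚ))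
              * h (i + (p2.sum fun _ n => n))
          = (b.choose i : ℚ) * ∑ p2 ∈ Finset.Iic f,
              (∏ j ∈ f.support, ((f j).choose (p2 j) : ℚ)) * h (i + (p2.sum fun _ n => n)) := by
            rw [Finset.mul_sum]
            exact Finset.sum_congr rfl fun m _ => by ring
        _ = _ := by rw [hih]
    rw [Finset.sum_congr rfl step2, vander]

/-- For any finitely supported multi-index `ν`,
`∑_{m ≤ ν} C(ν, m) · ((|m| + 2)!/2) · ((|ν − m| + 2)!/2) = (|ν| + 5)!/120`. -/
theorem sum_multiindex_factorial_five (ν : ℕ →₀ ℕ) :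
    (∑ m ∈ Finset.Iic ν,
      ((∏ j ∈ ν.support, (ν j).choose (m j)) : ℚ) *
        ((Nat.factorial ((m.sum fun _ n => n) + 2) : ℚ) / 2) *
        ((Nat.factorial (((ν - m).sum fun _ n => n) + 2) : ℚ) / 2))
    = (Nat.factorial ((ν.sum fun _ n => n) + 5) : ℚ) / 120 := by
  classical
  set n := ν.sum fun _ n => n with hn
  have hkey := key ν (fun k => ((k+2).factorial : ℚ)/2 * (((n - k + 2).factorial : ℚ)/2))
  beta_reduce at hkey
  have hterm : ∀ m ∈ Finset.Iic ν,
      ((∏ j ∈ ν.support, (ν j).choose (m j)) : ℚ) *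
        ((Nat.factorial ((m.sum fun _ n => n) + 2) : ℚ) / 2) *
        ((Nat.factorial (((ν - m).sum fun _ n => n) + 2) : ℚ) / 2)
      = (∏ j ∈ ν.support, ((ν j).choose (m j) : ℚ)) *
          ((((m.sum fun _ n => n)+2).factorial : ℚ)/2 *
            (((n - (m.sum fun _ n => n) + 2).factorial : ℚ)/2)) := by
    intro m hm
    rw [Finset.mem_Iic] at hm
    have hadd : m + (ν - m) = ν := add_tsub_cancel_of_le hm
    have hs : (m.sum fun _ n => n) + ((ν - m).sum fun _ n => n) = n := by
      have h2 : ((m + (ν - m)).sum fun _ n => n)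
          = (m.sum fun _ n => n) + ((ν - m).sum fun _ n => n) :=
        Finsupp.sum_add_index' (fun _ => rfl) (fun _ _ _ => rfl)
      rw [hadd] at h2
      rw [hn, ← h2]
    have hsub : ((ν - m).sum fun _ n => n) = n - (m.sum fun _ n => n) := by omega
    rw [hsub, mul_assoc]
  rw [Finset.sum_congr rfl hterm, hkey, single_var]
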